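/- Let u ∈ S_∞ (an aperiodic S-adic limit word over {0,1}), m = m_u the unique solution of m = 1 + Σ_{k≥0} u_k (1+√m)^{-k}, and β = 1 + √m. Then the number m/β has exactly two β-expansions over the alphabet {0,1,m}: one beginning with digit m followed by all zeros, and one beginning with digit 1 followed by the expansion u_1 u_2 … of m − 1. -/

import Mathlib

def tauL (h : ℕ) (b : Bool) : List Bool :=
  if b then List.replicate h false ++ [true] else List.replicate (h + 1) false ++ [true]

def joinW (f : ℕ → List Bool) : ℕ → Bool :=
  fun n => (((List.range (n + 1)).map f).flatten).getD n false

def applyTau (h : ℕ) (u : ℕ → Bool) : ℕ → Bool :=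
  joinW fun n => tauL h (u n)

namespace S18

def shift (c : ℕ) (x : ℕ → Bool) : ℕ → Bool := fun k => x (c + k)

lemma shift_shift (a b : ℕ) (x : ℕ → Bool) : shift a (shift b x) = shift (b + a) x := by
  funext k; simp [shift, Nat.add_assoc]

lemma tauL_length (h : ℕ) (b : Bool) : (tauL h b).length = if b then h + 1 else h + 2 := by
  cases b <;> simp [tauL]

lemma tauL_length_false (h : ℕ) : (tauL h false).length = h + 2 := by simp [tauL]

lemma tauL_length_true (h : ℕ) : (tauL h true).length = h + 1 := by simp [tauL]

lemma tauL_length_pos (h : ℕ) (b : Bool) : 1 ≤ (tauL h b).length := by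
  rw [tauL_length]; cases b <;> simp

lemma tauL_getD_false (h : ℕ) (b : Bool) (r : ℕ) (hr : r + 1 < (tauL h b).length) :
    (tauL h b).getD r false = false := by
  have : ∀ z, r < z → (List.replicate z false ++ [true]).getD r false = false := by
    intro z hz
    rw [List.getD_append _ _ _ _ (by simpa using hz)]
    simp [List.getD_eq_getElem?_getD, List.getElem?_replicate, hz]
  cases b <;> simp only [tauL] <;> rw [tauL_length] at hr <;> simp at hr <;>
    exact this _ (by omega)

lemma tauL_getD_true (h : ℕ) (b : Bool) :
    (tauL h b).getD ((tauL h b).length - 1) false = true := by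
  have key : ∀ z, (List.replicate z false ++ [true]).getD
      ((List.replicate z false ++ [true]).length - 1) false = true := by
    intro z
    have hz : (List.replicate z false ++ [true]).length - 1 = z := by simp
    rw [hz, List.getD_append_right _ _ _ _ (by simp)]
    simp
  cases b <;> simpa [tauL] using key _

def pos (h : ℕ) (w : ℕ → Bool) (j : ℕ) : ℕ := ∑ i ∈ Finset.range j, (tauL h (w i)).length

def flat (h : ℕ) (w : ℕ → Bool) (N : ℕ) : List Bool :=
  ((List.range N).map (fun i => tauL h (w i))).flatten

lemma pos_zero (h : ℕ) (w : ℕ → Bool) : pos h w 0 = 0 := rfl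

lemma pos_succ (h : ℕ) (w : ℕ → Bool) (j : ℕ) :
    pos h w (j + 1) = pos h w j + (tauL h (w j)).length := Finset.sum_range_succ _ _

lemma flat_succ (h : ℕ) (w : ℕ → Bool) (N : ℕ) :
    flat h w (N + 1) = flat h w N ++ tauL h (w N) := by
  simp [flat, List.range_succ]

lemma flat_length (h : ℕ) (w : ℕ → Bool) (N : ℕ) : (flat h w N).length = pos h w N := by
  induction N with
  | zero => rfl
  | succ N ih => rw [flat_succ, pos_succ, List.length_append, ih]

lemma le_pos (h : ℕ) (w : ℕ → Bool) (N : ℕ) : N ≤ pos h w N := by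
  induction N with
  | zero => simp
  | succ N ih => rw [pos_succ]; have := tauL_length_pos h (w N); omega

lemma pos_mono (h : ℕ) (w : ℕ → Bool) {a b : ℕ} (hab : a ≤ b) : pos h w a ≤ pos h w b :=
  Finset.sum_le_sum_of_subset (Finset.range_subset_range.mpr hab)

lemma flat_getD_stable (h : ℕ) (w : ℕ → Bool) {n N M : ℕ} (hn : n < pos h w N)
    (hNM : N ≤ M) : (flat h w M).getD n false = (flat h w N).getD n false := by
  induction M with
  | zero =>
    have hN0 : N = 0 := by omega
    subst hN0; rfl
  | succ M ih =>
    rcases Nat.lt_or_ge N (M+1) with hc | hc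
    · have h1 := ih (by omega)
      rw [flat_succ, List.getD_append _ _ _ _ (by
        rw [flat_length]
        exact lt_of_lt_of_le hn (pos_mono h w (by omega)))]
      exact h1
    · have hNM1 : N = M + 1 := by omega
      subst hNM1; rfl

lemma applyTau_eq_flat (h : ℕ) (w : ℕ → Bool) {n N : ℕ} (hn : n < pos h w N) :
    applyTau h w n = (flat h w N).getD n false := by
  have h1 : applyTau h w n = (flat h w (n+1)).getD n false := rfl
  have h2 : n < pos h w (n+1) := lt_of_lt_of_le (by omega) (le_pos h w (n+1))
  rcases Nat.le_total N (n+1) with hc | hc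
  · rw [h1, flat_getD_stable h w hn hc]
  · rw [h1, ← flat_getD_stable h w h2 hc]

lemma applyTau_block (h : ℕ) (w : ℕ → Bool) {j r : ℕ} (hr : r < (tauL h (w j)).length) :
    applyTau h w (pos h w j + r) = (tauL h (w j)).getD r false := by
  have h1 : pos h w j + r < pos h w (j + 1) := by rw [pos_succ]; omega
  rw [applyTau_eq_flat h w h1, flat_succ,
    List.getD_append_right _ _ _ _ (by rw [flat_length]; omega)]
  congr 1
  rw [flat_length]; omega

lemma exists_block (h : ℕ) (w : ℕ → Bool) (n : ℕ) :
    ∃ j r, n = pos h w j + r ∧ r < (tauL h (w j)).length := by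
  induction n with
  | zero => exact ⟨0, 0, by simp [pos_zero], tauL_length_pos h (w 0)⟩
  | succ n ih =>
    obtain ⟨j, r, rfl, hr⟩ := ih
    rcases Nat.lt_or_ge (r + 1) (tauL h (w j)).length with hc | hc
    · exact ⟨j, r + 1, by omega, hc⟩
    · refine ⟨j + 1, 0, ?_, tauL_length_pos h (w (j+1))⟩
      rw [pos_succ]; omega

lemma pos_add (h : ℕ) (w : ℕ → Bool) (a b : ℕ) :
    pos h w (a + b) = pos h w a + pos h (shift a w) b := by
  induction b with
  | zero => simp [pos_zero]
  | succ b ih =>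
    rw [← Nat.add_assoc, pos_succ, pos_succ, ih, shift, Nat.add_assoc]

lemma applyTau_shift (h : ℕ) (w : ℕ → Bool) (j n : ℕ) :
    applyTau h w (pos h w j + n) = applyTau h (shift j w) n := by
  obtain ⟨j₂, r, rfl, hr⟩ := exists_block h (shift j w) n
  rw [applyTau_block h (shift j w) hr]
  have h1 : pos h w j + (pos h (shift j w) j₂ + r) = pos h w (j + j₂) + r := by
    rw [pos_add h w j j₂]; omega
  rw [h1, applyTau_block h w (by simpa [shift] using hr)]
  rfl

def lexLt (x y : ℕ → Bool) : Prop :=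
  ∃ p, (∀ q, q < p → x q = y q) ∧ x p = false ∧ y p = true

lemma pos_congr (h : ℕ) {w w' : ℕ → Bool} (j : ℕ) (hw : ∀ i, i < j → w i = w' i) :
    pos h w j = pos h w' j := by
  unfold pos
  exact Finset.sum_congr rfl (fun i hi => by rw [hw i (Finset.mem_range.mp hi)])

lemma lexLt_applyTau (h : ℕ) {w w' : ℕ → Bool} (hlt : lexLt w w') :
    lexLt (applyTau h w) (applyTau h w') := by
  obtain ⟨p, hagree, hwp, hw'p⟩ := hlt
  have hposp : pos h w p = pos h w' p := pos_congr h p hagree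
  refine ⟨pos h w p + h, ?_, ?_, ?_⟩
  · intro Q hQ
    rcases Nat.lt_or_ge Q (pos h w p) with hc | hc
    · obtain ⟨j, r, rfl, hr⟩ := exists_block h w Q
      have hjp : j < p := by
        by_contra hjp
        have := pos_mono h w (show p ≤ j by omega)
        omega
      have hwj : w j = w' j := hagree j hjp
      have hposj : pos h w j = pos h w' j := pos_congr h j (fun i hi => hagree i (by omega))
      rw [applyTau_block h w hr, hposj, applyTau_block h w' (by rwa [← hwj]), hwj]
    · set q := Q - pos h w p with hq
      have hQe : Q = pos h w p + q := by omega
      have hqh : q < h := by omega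
      rw [hQe, applyTau_block h w (by rw [hwp, tauL_length_false]; omega),
        hposp, applyTau_block h w' (by rw [hw'p, tauL_length_true]; omega)]
      rw [hwp, hw'p, tauL_getD_false h _ q (by rw [tauL_length_false]; omega),
        tauL_getD_false h _ q (by rw [tauL_length_true]; omega)]
  · rw [applyTau_block h w (by rw [hwp, tauL_length_false]; omega), hwp]
    exact tauL_getD_false h _ h (by rw [tauL_length_false]; omega)
  · rw [hposp, applyTau_block h w' (by rw [hw'p, tauL_length_true]; omega), hw'p]
    have := tauL_getD_true h true
    rwa [tauL_length_true, Nat.add_sub_cancel] at this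

lemma lexLt_of_shift {x y : ℕ → Bool} (c : ℕ) (hagree : ∀ q, q < c → x q = y q)
    (hlt : lexLt (shift c x) (shift c y)) : lexLt x y := by
  obtain ⟨p, ha, hx, hy⟩ := hlt
  refine ⟨c + p, ?_, hx, hy⟩
  intro q hq
  rcases Nat.lt_or_ge q c with hc | hc
  · exact hagree q hc
  · have : q = c + (q - c) := by omega
    rw [this]
    exact ha (q - c) (by omega)

section Tower

variable (hs : ℕ → ℕ) (U : ℕ → ℕ → Bool)
variable (hprim : ∀ N, ∃ n ≥ N, hs n ≠ 0)
variable (hU : ∀ n, U n = applyTau (hs n) (U (n + 1)))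

lemma applyTau_zero_aux (h : ℕ) (w : ℕ → Bool) :
    applyTau h w 0 = (tauL h (w 0)).getD 0 false := by
  have := applyTau_block h w (j := 0) (r := 0) (tauL_length_pos h (w 0))
  simpa [pos_zero] using this

include hU

include hprim in
lemma first_false : ∀ n, U n 0 = false := by
  have aux : ∀ t n, hs (n + t) ≠ 0 → U n 0 = false := by
    intro t
    induction t with
    | zero =>
      intro n hn
      have hn' : hs n ≠ 0 := by simpa using hn
      rw [hU n, applyTau_zero_aux (hs n) (U (n+1))]
      exact tauL_getD_false _ _ 0 (by
        rw [tauL_length]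
        rcases U (n+1) 0 with _ | _ <;> simp <;> omega)
    | succ t ih =>
      intro n hn
      rcases eq_or_ne (hs n) 0 with h0 | h0
      · rw [hU n, applyTau_zero_aux (hs n) (U (n+1)), h0]
        have := ih (n + 1) (by rwa [show n + 1 + t = n + (t+1) by omega])
        rw [this]
        exact tauL_getD_false 0 false 0 (by rw [tauL_length_false]; omega)
      · rw [hU n, applyTau_zero_aux (hs n) (U (n+1))]
        exact tauL_getD_false _ _ 0 (by
          rw [tauL_length]
          rcases U (n+1) 0 with _ | _ <;> simp <;> omega)
  intro n
  obtain ⟨nn, hnn, hnz⟩ := hprim n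
  exact aux (nn - n) n (by rwa [Nat.add_sub_cancel' hnn])

include hprim in
lemma prefix_false {n q : ℕ} (hq : q ≤ hs n) : U n q = false := by
  rw [hU n]
  have h0 : U (n+1) 0 = false := first_false hs U hprim hU (n+1)
  have := applyTau_block (hs n) (U (n+1)) (j := 0) (r := q)
    (by rw [h0, tauL_length_false]; omega)
  rw [pos_zero, Nat.zero_add] at this
  rw [this, h0]
  exact tauL_getD_false _ _ q (by rw [tauL_length_false]; omega)

include hprim in
lemma prefix_true (n : ℕ) : U n (hs n + 1) = true := by
  rw [hU n]
  have h0 : U (n+1) 0 = false := first_false hs U hprim hU (n+1)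
  have := applyTau_block (hs n) (U (n+1)) (j := 0) (r := hs n + 1)
    (by rw [h0, tauL_length_false]; omega)
  rw [pos_zero, Nat.zero_add] at this
  rw [this, h0]
  have := tauL_getD_true (hs n) false
  rwa [tauL_length_false, show hs n + 2 - 1 = hs n + 1 by omega] at this

include hprim in
lemma claim1 : ∀ i, 0 < i → ∀ n, lexLt (U n) (shift i (U n)) := by
  intro i
  induction i using Nat.strong_induction_on with
  | _ i ih =>
    intro hi n
    set h := hs n with hh
    set w := U (n + 1) with hw
    have hw0 : w 0 = false := first_false hs U hprim hU (n+1)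
    have hun : U n = applyTau h w := hU n
    obtain ⟨j, r, hir, hr⟩ := exists_block h w i
    rcases eq_or_ne r 0 with hr0 | hr0
    · -- boundary case
      subst hr0
      rw [Nat.add_zero] at hir
      have hj1 : 1 ≤ j := by
        rcases eq_or_ne j 0 with hj0 | hj0
        · exfalso; rw [hj0, pos_zero] at hir; omega
        · omega
      rcases hwj : w j with _ | _
      · -- w j = false : recurse
        have hji : j < i := by
          have h1 : pos h w j = pos h w (1 + (j-1)) := by congr 1; omega
          have h2 : pos h w (1 + (j-1)) = pos h w 1 + pos h (shift 1 w) (j-1) := pos_add _ _ _ _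
          have h3 : pos h w 1 = (tauL h (w 0)).length := by
            rw [show (1:ℕ) = 0 + 1 from rfl, pos_succ, pos_zero, Nat.zero_add]
          have h4 : (tauL h (w 0)).length = h + 2 := by rw [hw0, tauL_length_false]
          have h5 := le_pos h (shift 1 w) (j - 1)
          omega
        have hIH := ih j hji (by omega) (n + 1)
        have hmono := lexLt_applyTau h hIH
        rw [← hw, ← hun] at hmono
        have heq : applyTau h (shift j w) = shift i (U n) := by
          funext k
          rw [← applyTau_shift, hun, shift, hir]
        rwa [heq] at hmono
      · -- w j = true : direct witness p = h
        refine ⟨h, ?_, ?_, ?_⟩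
        · intro q hq
          have hL : U n q = false := prefix_false hs U hprim hU (by omega)
          have hR : shift i (U n) q = false := by
            rw [shift, hun, hir, applyTau_block h w (by rw [hwj, tauL_length_true]; omega),
              hwj]
            exact tauL_getD_false _ _ q (by rw [tauL_length_true]; omega)
          rw [hL, hR]
        · exact prefix_false hs U hprim hU (le_refl _)
        · rw [shift, hun, hir, applyTau_block h w (by rw [hwj, tauL_length_true]; omega), hwj]
          have := tauL_getD_true h true
          rwa [tauL_length_true, Nat.add_sub_cancel] at this
    · -- interior case
      set L := (tauL h (w j)).length with hL
      have hLh : L ≤ h + 2 := by rw [hL, tauL_length]; rcases w j with _|_ <;> simp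
      set a := L - 1 - r with ha
      have hah : a ≤ h := by omega
      refine ⟨a, ?_, ?_, ?_⟩
      · intro q hq
        have hLq : U n q = false := prefix_false hs U hprim hU (by omega)
        have hRq : shift i (U n) q = false := by
          rw [shift, hun, hir, show pos h w j + r + q = pos h w j + (r + q) by omega,
            applyTau_block h w (by omega)]
          exact tauL_getD_false _ _ _ (by omega)
        rw [hLq, hRq]
      · exact prefix_false hs U hprim hU hah
      · rw [shift, hun, hir, show pos h w j + r + a = pos h w j + (L - 1) by omega,
          applyTau_block h w (by omega)]
        exact tauL_getD_true h (w j)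

include hprim in
lemma claim2 : ∀ j n, U n j = true → lexLt (shift (j+1) (U n)) (shift 1 (U n)) := by
  intro j
  induction j using Nat.strong_induction_on with
  | _ j ihj =>
    suffices H : ∀ K, ∀ n, hs (n + K) ≠ 0 → U n j = true →
        lexLt (shift (j+1) (U n)) (shift 1 (U n)) by
      intro n hj
      obtain ⟨nn, hnn, hnz⟩ := hprim n
      exact H (nn - n) n (by rwa [Nat.add_sub_cancel' hnn]) hj
    intro K
    induction K using Nat.strong_induction_on with
    | _ K ihK =>
      intro n hKnz hj
      set h := hs n with hh
      set w := U (n + 1) with hw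
      have hw0 : w 0 = false := first_false hs U hprim hU (n+1)
      have hun : U n = applyTau h w := hU n
      -- decompose j as end of a block
      obtain ⟨j', r, hir, hr⟩ := exists_block h w j
      have hrL : r = (tauL h (w j')).length - 1 := by
        by_contra hne
        have h1 : r + 1 < (tauL h (w j')).length := by omega
        have := tauL_getD_false h (w j') r h1
        rw [hun, hir, applyTau_block h w hr, this] at hj
        exact Bool.false_ne_true hj
      have hj1 : j + 1 = pos h w (j' + 1) := by
        rw [pos_succ]
        have := tauL_length_pos h (w j')
        omega
      -- first block of w has length h+2
      have hpos1 : pos h w 1 = h + 2 := by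
        rw [show (1:ℕ) = 0 + 1 from rfl, pos_succ, pos_zero, Nat.zero_add, hw0,
          tauL_length_false]
      -- values of U n on the first block : U n (1+q) for q ≤ h
      have hUfirst : ∀ q, q ≤ h → shift 1 (U n) q = if q = h then true else false := by
        intro q hq
        rcases eq_or_ne q h with hqe | hqe
        · rw [if_pos hqe, hqe, shift]
          have := prefix_true hs U hprim hU n
          rwa [show hs n + 1 = 1 + h by omega] at this
        · rw [if_neg hqe, shift]
          exact prefix_false hs U hprim hU (by omega)
      rcases hwj1 : w (j' + 1) with _ | _
      · -- next letter false : direct comparison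
        refine ⟨h, ?_, ?_, ?_⟩
        · intro q hq
          have hRL : shift (j+1) (U n) q = false := by
            rw [shift, hun, show j + 1 + q = pos h w (j'+1) + q by omega,
              applyTau_block h w (by rw [hwj1, tauL_length_false]; omega), hwj1]
            exact tauL_getD_false _ _ q (by rw [tauL_length_false]; omega)
          rw [hRL, hUfirst q (by omega), if_neg (by omega)]
        · rw [shift, hun, show j + 1 + h = pos h w (j'+1) + h by omega,
            applyTau_block h w (by rw [hwj1, tauL_length_false]; omega), hwj1]
          exact tauL_getD_false _ _ h (by rw [tauL_length_false]; omega)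
        · rw [hUfirst h (le_refl _), if_pos rfl]
      · -- next letter true : recurse
        have hjlow : j' + h + 1 ≤ j := by
          have h1 : pos h w (j' + 1) = pos h w (1 + j') := by congr 1; omega
          have h2 : pos h w (1 + j') = pos h w 1 + pos h (shift 1 w) j' := pos_add _ _ _ _
          have h3 := le_pos h (shift 1 w) j'
          omega
        have hnext : lexLt (shift (j' + 1 + 1) (U (n+1))) (shift 1 (U (n+1))) := by
          rcases Nat.lt_or_ge (j' + 1) j with hlt | hge
          · exact ihj (j' + 1) hlt (n + 1) hwj1
          · -- j' + 1 = j and h = 0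
            have hj'j : j' + 1 = j := by omega
            have hh0 : h = 0 := by omega
            have hK0 : K ≠ 0 := by
              intro hK0
              rw [hK0] at hKnz
              simp at hKnz
              rw [← hh] at hKnz
              omega
            have := ihK (K - 1) (by omega) (n + 1)
              (by rwa [show n + 1 + (K-1) = n + K by omega])
              (by rw [hj'j] at hwj1; exact hwj1)
            rwa [← hj'j] at this
        have hmono := lexLt_applyTau h hnext
        -- identify the two sides
        have hplen : pos h w (j' + 1 + 1) = j + 1 + (h + 1) := by
          rw [pos_succ, hwj1, tauL_length_true]; omega
        have hid1 : applyTau h (shift (j' + 1 + 1) w) = shift (h + 1) (shift (j+1) (U n)) := by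
          funext k
          rw [← applyTau_shift, hun]
          simp only [shift]
          congr 1
          omega
        have hid2 : applyTau h (shift 1 w) = shift (h + 1) (shift 1 (U n)) := by
          funext k
          rw [← applyTau_shift, hun]
          simp only [shift]
          congr 1
          omega
        rw [hid1, hid2] at hmono
        refine lexLt_of_shift (h + 1) ?_ hmono
        intro q hq
        have hL : shift (j+1) (U n) q = if q = h then true else false := by
          rcases eq_or_ne q h with hqe | hqe
          · rw [if_pos hqe, hqe, shift, hun, show j + 1 + h = pos h w (j'+1) + h by omega,
              applyTau_block h w (by rw [hwj1, tauL_length_true]; omega), hwj1]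
            have := tauL_getD_true h true
            rwa [tauL_length_true, Nat.add_sub_cancel] at this
          · rw [if_neg hqe, shift, hun, show j + 1 + q = pos h w (j'+1) + q by omega,
              applyTau_block h w (by rw [hwj1, tauL_length_true]; omega), hwj1]
            exact tauL_getD_false _ _ q (by rw [tauL_length_true]; omega)
        rw [hL, hUfirst q (by omega)]

end Tower


noncomputable def dig (b : Bool) : ℝ := if b then 1 else 0

noncomputable def sval (β : ℝ) (c : ℕ → ℝ) : ℝ := ∑' k, c k / β ^ (k + 1)

lemma dig_nonneg (b : Bool) : 0 ≤ dig b := by unfold dig; split <;> norm_num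

lemma dig_le_one (b : Bool) : dig b ≤ 1 := by unfold dig; split <;> norm_num

section An

variable {β : ℝ} (hβ : 1 < β) {c : ℕ → ℝ} {C : ℝ}
  (h0 : ∀ k, 0 ≤ c k) (hC : ∀ k, c k ≤ C)

include hβ h0 hC in
lemma summable_sval : Summable (fun k => c k / β ^ (k + 1)) := by
  have hb0 : (0:ℝ) < β := by linarith
  have hr0 : (0:ℝ) ≤ 1/β := by positivity
  have hr1 : 1/β < 1 := by rw [div_lt_one hb0]; linarith
  have hgeo : Summable (fun k : ℕ => (C * (1/β)) * (1/β)^k) :=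
    (summable_geometric_of_lt_one hr0 hr1).mul_left _
  refine Summable.of_nonneg_of_le (fun k => div_nonneg (h0 k) (by positivity)) ?_ hgeo
  intro k
  have h1 : c k / β ^ (k+1) = c k * (1/β)^(k+1) := by
    rw [one_div, inv_pow, div_eq_mul_inv]
  have h2 : (C * (1/β)) * (1/β)^k = C * (1/β)^(k+1) := by
    rw [pow_succ]; ring
  rw [h1, h2]
  exact mul_le_mul_of_nonneg_right (hC k) (by positivity)

include hβ h0 in
lemma sval_nonneg : 0 ≤ sval β c :=
  tsum_nonneg (fun k => div_nonneg (h0 k) (by positivity))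

include hβ h0 hC in
lemma sval_le : sval β c ≤ C / (β - 1) := by
  have hb0 : (0:ℝ) < β := by linarith
  have hr0 : (0:ℝ) ≤ 1/β := by positivity
  have hr1 : 1/β < 1 := by rw [div_lt_one hb0]; linarith
  have hgeo : Summable (fun k : ℕ => (C * (1/β)) * (1/β)^k) :=
    (summable_geometric_of_lt_one hr0 hr1).mul_left _
  have hle : ∀ k, c k / β ^ (k+1) ≤ (C * (1/β)) * (1/β)^k := by
    intro k
    have h1 : c k / β ^ (k+1) = c k * (1/β)^(k+1) := by
      rw [one_div, inv_pow, div_eq_mul_inv]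
    have h2 : (C * (1/β)) * (1/β)^k = C * (1/β)^(k+1) := by
      rw [pow_succ]; ring
    rw [h1, h2]
    exact mul_le_mul_of_nonneg_right (hC k) (by positivity)
  have := Summable.tsum_le_tsum hle (summable_sval hβ h0 hC) hgeo
  refine le_trans this (le_of_eq ?_)
  rw [tsum_mul_left, tsum_geometric_of_lt_one hr0 hr1]
  have h1 : 1 - 1/β = (β - 1)/β := by field_simp
  rw [h1, inv_div]
  field_simp

include hβ h0 hC in
lemma sval_split_p (p : ℕ) :
    sval β c = (∑ i ∈ Finset.range p, c i / β ^ (i + 1))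
      + sval β (fun k => c (p + k)) / β ^ p := by
  have hf := summable_sval hβ h0 hC
  have h1 := Summable.sum_add_tsum_nat_add p hf
  have h2 : ∀ k : ℕ, c (k + p) / β ^ (k + p + 1) = (c (p + k) / β ^ (k+1)) / β ^ p := by
    intro k
    rw [div_div, ← pow_add]
    congr 2
    · omega
    · omega
  rw [sval, ← h1]
  congr 1
  rw [tsum_congr h2, tsum_div_const]
  rfl

include hβ h0 hC in
lemma sval_split : sval β c = c 0 / β + sval β (fun k => c (1 + k)) / β := by
  have := sval_split_p hβ h0 hC 1
  rw [Finset.sum_range_one] at this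
  simpa using this

end An

noncomputable def val (β : ℝ) (x : ℕ → Bool) : ℝ := sval β (fun k => dig (x k))

lemma val_nonneg {β : ℝ} (hβ : 1 < β) (x : ℕ → Bool) : 0 ≤ val β x :=
  sval_nonneg hβ (fun k => dig_nonneg _)

lemma val_le {β : ℝ} (hβ : 1 < β) (x : ℕ → Bool) : val β x ≤ 1 / (β - 1) :=
  sval_le hβ (fun k => dig_nonneg _) (fun k => dig_le_one _)

lemma val_split {β : ℝ} (hβ : 1 < β) (x : ℕ → Bool) :
    val β x = dig (x 0) / β + val β (shift 1 x) / β := by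
  have := sval_split hβ (c := fun k => dig (x k)) (C := 1)
    (fun k => dig_nonneg _) (fun k => dig_le_one _)
  rw [val, this]
  rfl

lemma val_lt_of_lexLt {β : ℝ} (hβ : 2 < β) {x y : ℕ → Bool} (hlt : lexLt x y) :
    val β x < val β y := by
  have hβ1 : (1:ℝ) < β := by linarith
  obtain ⟨p, hagree, hx, hy⟩ := hlt
  have hsx := sval_split_p hβ1 (c := fun k => dig (x k)) (C := 1)
    (fun k => dig_nonneg _) (fun k => dig_le_one _) p
  have hsy := sval_split_p hβ1 (c := fun k => dig (y k)) (C := 1)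
    (fun k => dig_nonneg _) (fun k => dig_le_one _) p
  have hsums : (∑ i ∈ Finset.range p, dig (x i) / β ^ (i + 1))
      = ∑ i ∈ Finset.range p, dig (y i) / β ^ (i + 1) :=
    Finset.sum_congr rfl (fun i hi => by rw [hagree i (Finset.mem_range.mp hi)])
  have hkey : sval β (fun k => dig (x (p + k))) < sval β (fun k => dig (y (p + k))) := by
    have hx' : sval β (fun k => dig (x (p + k)))
        = dig (x p) / β + sval β (fun k => dig (x (p + (1 + k)))) / β := by
      have := sval_split hβ1 (c := fun k => dig (x (p + k))) (C := 1)
        (fun k => dig_nonneg _) (fun k => dig_le_one _)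
      simpa using this
    have hy' : sval β (fun k => dig (y (p + k)))
        = dig (y p) / β + sval β (fun k => dig (y (p + (1 + k)))) / β := by
      have := sval_split hβ1 (c := fun k => dig (y (p + k))) (C := 1)
        (fun k => dig_nonneg _) (fun k => dig_le_one _)
      simpa using this
    have hA : sval β (fun k => dig (x (p + (1 + k)))) ≤ 1 / (β - 1) :=
      sval_le hβ1 (fun k => dig_nonneg _) (fun k => dig_le_one _)
    have hB : 0 ≤ sval β (fun k => dig (y (p + (1 + k)))) :=
      sval_nonneg hβ1 (fun k => dig_nonneg _)
    have hA1 : 1 / (β - 1) < 1 := by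
      rw [div_lt_one (by linarith)]; linarith
    rw [hx', hy', hx, hy]
    have hd0 : dig false = 0 := rfl
    have hd1 : dig true = 1 := rfl
    rw [hd0, hd1]
    have hb0 : (0:ℝ) < β := by linarith
    have hAlt : sval β (fun k => dig (x (p + (1 + k)))) < 1 := lt_of_le_of_lt hA hA1
    rw [zero_div, zero_add, ← add_div, div_lt_div_iff₀ hb0 hb0]
    nlinarith
  rw [val, val, hsx, hsy, hsums]
  have hb0 : (0:ℝ) < β ^ p := by positivity
  have h2 : sval β (fun k => dig (x (p + k))) / β ^ p
      < sval β (fun k => dig (y (p + k))) / β ^ p := by gcongr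
  linarith


end S18

/-- u ∈ S_∞ : u is the limit word of a primitive sequence of substitutions
(τ_{hs n})_{n≥0}, where primitive means hs n ≠ 0 infinitely often. -/
def IsPrimitiveLimitWord (u : ℕ → Bool) : Prop :=
  ∃ hs : ℕ → ℕ, (∀ N, ∃ n ≥ N, hs n ≠ 0) ∧
    ∃ U : ℕ → ℕ → Bool, U 0 = u ∧ ∀ n, U n = applyTau (hs n) (U (n + 1))

open S18 in
/-- for u ∈ S_∞, m = m_u and β = 1+√m, the number m/β has exactly two
β-expansions over {0,1,m}: m·0^ω and 1·u_1u_2…. -/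
theorem stmt_18 (u : ℕ → Bool) (hS : IsPrimitiveLimitWord u)
    (m : ℝ) (hm1 : 1 < m)
    (hme : m = 1 + ∑' k : ℕ, (if u k then (1 : ℝ) else 0) / (1 + Real.sqrt m) ^ k) :
    ((∑' k : ℕ, (if k = 0 then m else 0) / (1 + Real.sqrt m) ^ (k + 1)) =
        m / (1 + Real.sqrt m)) ∧
    ((∑' k : ℕ, (if k = 0 then (1 : ℝ) else if u k then 1 else 0) / (1 + Real.sqrt m) ^ (k + 1)) =
        m / (1 + Real.sqrt m)) ∧
    (fun k : ℕ => if k = 0 then m else 0) ≠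
      (fun k : ℕ => if k = 0 then (1 : ℝ) else if u k then 1 else 0) ∧
    ∀ v : ℕ → ℝ, (∀ k, v k = 0 ∨ v k = 1 ∨ v k = m) →
      (∑' k : ℕ, v k / (1 + Real.sqrt m) ^ (k + 1)) = m / (1 + Real.sqrt m) →
      v = (fun k : ℕ => if k = 0 then m else 0) ∨
        v = (fun k : ℕ => if k = 0 then (1 : ℝ) else if u k then 1 else 0) := by
  obtain ⟨hs, hprim, U, hU0, hU⟩ := hS
  have hm0 : (0:ℝ) < m := by linarith
  set S : ℝ := Real.sqrt m with hSdef
  have hS1 : 1 < S := by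
    rw [hSdef, show (1:ℝ) = Real.sqrt 1 by rw [Real.sqrt_one]]
    exact Real.sqrt_lt_sqrt (by norm_num) hm1
  set β : ℝ := 1 + S with hβdef
  have hβ2 : 2 < β := by rw [hβdef]; linarith
  have hβ1 : 1 < β := by linarith
  have hb0 : (0:ℝ) < β := by linarith
  have hbne : β ≠ 0 := ne_of_gt hb0
  have hSm : S^2 = m := Real.sq_sqrt (le_of_lt hm0)
  have hβS : β - 1 = S := by rw [hβdef]; ring
  -- first letter of u is false
  have hu0 : u 0 = false := by rw [← hU0]; exact first_false hs U hprim hU 0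
  -- the value of the tail of u : val β (shift 1 u) = m - 1
  have hme' : m - 1 = ∑' k : ℕ, (if u k then (1:ℝ) else 0) / β ^ k := by
    rw [hme]; ring
  have htsum1 : (∑' k : ℕ, (if u k then (1:ℝ) else 0) / β ^ k) = β * val β u := by
    rw [val, sval, ← tsum_mul_left]
    apply tsum_congr
    intro k
    have hd : (if u k = true then (1:ℝ) else 0) = dig (u k) := rfl
    rw [hd]
    have hpne : (β:ℝ) ^ k ≠ 0 := by positivity
    field_simp
    ring
  have hvs : val β (shift 1 u) = m - 1 := by
    have h1 : m - 1 = β * val β u := by rw [hme', htsum1]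
    have h2 := val_split hβ1 u
    rw [hu0] at h2
    have hd : dig false = 0 := rfl
    rw [hd] at h2
    rw [h1, h2]
    field_simp
    ring
  have hvalu : val β u = S - 1 := by
    have h2 := val_split hβ1 u
    rw [hu0, show dig false = (0:ℝ) from rfl, hvs] at h2
    rw [h2, zero_div, zero_add, div_eq_iff hbne, hβdef]
    nlinarith [hSm]
  -- KEY inequalities
  have hKEYlow : ∀ j : ℕ, 0 < j → S - 1 < val β (shift (j+1) u) := by
    intro j hj
    have hc := claim1 hs U hprim hU (j+1) (by omega) 0
    rw [hU0] at hc
    have := val_lt_of_lexLt hβ2 hc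
    rwa [hvalu] at this
  have hKEYhigh : ∀ j : ℕ, u j = true → val β (shift (j+1) u) < m - 1 := by
    intro j hj
    have hc := claim2 hs U hprim hU j 0 (by rw [hU0]; exact hj)
    rw [hU0] at hc
    have := val_lt_of_lexLt hβ2 hc
    rwa [hvs] at this
  have hval_le : ∀ x : ℕ → Bool, val β x ≤ 1/(β-1) := fun x => val_le hβ1 x
  have hSinv : 1/(β-1) < 1 := by rw [hβS, div_lt_one (by linarith)]; linarith
  refine ⟨?_, ?_, ?_, ?_⟩
  · -- first expansion
    rw [tsum_eq_single 0 (by intro k hk; rw [if_neg hk, zero_div])]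
    norm_num
  · -- second expansion
    have hD : (∑' k : ℕ, (if k = 0 then (1 : ℝ) else if u k then 1 else 0) / β ^ (k + 1))
        = sval β (fun k => if k = 0 then (1:ℝ) else dig (u k)) := rfl
    rw [hD, sval_split hβ1 (C := 1)
      (by intro k
          show (0:ℝ) ≤ if k = 0 then (1:ℝ) else dig (u k)
          split
          · norm_num
          · exact dig_nonneg _)
      (by intro k
          show (if k = 0 then (1:ℝ) else dig (u k)) ≤ 1
          split
          · norm_num
          · exact dig_le_one _)]
    have h1 : (fun k => if 1 + k = 0 then (1:ℝ) else dig (u (1 + k)))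
        = fun k => dig (shift 1 u k) := by
      funext k
      rw [if_neg (by omega)]
      rfl
    rw [if_pos rfl, h1]
    have h2 : sval β (fun k => dig (shift 1 u k)) = val β (shift 1 u) := rfl
    rw [h2, hvs]
    field_simp
    ring
  · -- the two expansions differ
    intro hcontra
    have := congrFun hcontra 0
    simp at this
    linarith
  · -- uniqueness
    intro v hv hvsum
    have hv0 : ∀ k, 0 ≤ v k := by
      intro k; rcases hv k with h|h|h <;> rw [h] <;> linarith
    have hvC : ∀ k, v k ≤ m := by
      intro k; rcases hv k with h|h|h <;> rw [h] <;> linarith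
    set T : ℕ → ℝ := fun j => sval β (fun k => v (j + k)) with hT
    have hT0 : ∀ j, 0 ≤ T j := fun j => sval_nonneg hβ1 (fun k => hv0 _)
    have hTle : ∀ j, T j ≤ S := by
      intro j
      have := sval_le hβ1 (c := fun k => v (j + k)) (C := m) (fun k => hv0 _) (fun k => hvC _)
      refine le_trans this (le_of_eq ?_)
      rw [hβS, div_eq_iff (by linarith)]
      nlinarith [hSm]
    have hTsplit : ∀ j, T j = v j / β + T (j+1) / β := by
      intro j
      have h1 := sval_split hβ1 (c := fun k => v (j + k)) (C := m) (fun k => hv0 _) (fun k => hvC _)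
      have h2 : (fun k => (fun k => v (j + k)) (1 + k)) = (fun k => v (j + 1 + k)) := by
        funext k
        show v (j + (1 + k)) = v (j + 1 + k)
        congr 1
        omega
      have h3 : (fun k => v (j + k)) 0 = v j := by simp
      rw [h2, add_zero] at h1
      simp only [hT]
      exact h1
    have hT0eq : T 0 = m / β := by
      rw [← hvsum]
      simp only [hT]
      apply tsum_congr
      intro k
      norm_num
    have hstart : v 0 + T 1 = m := by
      have h1 := hTsplit 0
      rw [hT0eq] at h1
      field_simp at h1
      linarith
    -- case analysis on v 0
    rcases hv 0 with hv00 | hv01 | hv0m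
    · -- v 0 = 0 : impossible
      exfalso
      have h1 : T 1 = m := by rw [hv00] at hstart; linarith
      have := hTle 1
      rw [h1] at this
      nlinarith [hSm]
    · -- v 0 = 1 : second expansion
      right
      have hT1 : T 1 = m - 1 := by rw [hv01] at hstart; linarith
      have hvrec : ∀ j : ℕ, β * val β (shift j u) = dig (u j) + val β (shift (j+1) u) := by
        intro j
        have h2 := val_split hβ1 (shift j u)
        have h3 : shift j u 0 = u j := by simp [shift]
        have h4 : shift 1 (shift j u) = shift (j+1) u := by
          rw [shift_shift]
        rw [h3, h4] at h2
        rw [h2]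
        field_simp
      have main : ∀ j : ℕ, 1 ≤ j → T j = val β (shift j u) := by
        intro j
        induction j with
        | zero => omega
        | succ j ihj =>
          intro _
          rcases Nat.eq_or_lt_of_le (Nat.one_le_iff_ne_zero.mpr (Nat.succ_ne_zero j)) with h|hj1
          · -- j + 1 = 1
            have hj0 : j = 0 := by omega
            rw [hj0, hT1, ← hvs]
          · have hjge : 1 ≤ j := by omega
            have hTj := ihj hjge
            have hstep : T (j+1) = β * T j - v j := by
              have := hTsplit j
              field_simp at this
              linarith
            rw [hstep, hTj, hvrec j]
            rcases huj : u j with _|_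
            · -- u j = false
              have hd : dig false = (0:ℝ) := rfl
              rw [hd, zero_add]
              rcases hv j with h|h|h
              · rw [h]; ring
              · exfalso
                have hle := hval_le (shift (j+1) u)
                have hTj1 := hT0 (j+1)
                rw [hstep, hTj, hvrec j, huj, hd, zero_add, h] at hTj1
                linarith
              · exfalso
                have hle := hval_le (shift (j+1) u)
                have hTj1 := hT0 (j+1)
                rw [hstep, hTj, hvrec j, huj, hd, zero_add, h] at hTj1
                linarith
            · -- u j = true
              have hd : dig true = (1:ℝ) := rfl
              rw [hd]
              rcases hv j with h|h|h
              · exfalso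
                have hlow := hKEYlow j hjge
                have hTj1 := hTle (j+1)
                rw [hstep, hTj, hvrec j, huj, hd, h] at hTj1
                linarith
              · rw [h]; ring
              · exfalso
                have hhigh := hKEYhigh j huj
                have hTj1 := hT0 (j+1)
                rw [hstep, hTj, hvrec j, huj, hd, h] at hTj1
                linarith
      have hdigits : ∀ j : ℕ, 1 ≤ j → v j = dig (u j) := by
        intro j hj
        have h1 := main j hj
        have h2 := main (j+1) (by omega)
        have hstep : T (j+1) = β * T j - v j := by
          have := hTsplit j
          field_simp at this
          linarith
        have h3 := hvrec j
        rw [h1, h2] at hstep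
        linarith
      funext k
      rcases Nat.eq_zero_or_pos k with hk0 | hkpos
      · rw [hk0, hv01]; norm_num
      · have hvk := hdigits k hkpos
        rw [hvk, if_neg (show ¬ k = 0 by omega)]
        rfl
    · -- v 0 = m : first expansion
      left
      have hT1 : T 1 = 0 := by rw [hv0m] at hstart; linarith
      have hz : ∀ k, v (1 + k) = 0 := by
        intro k
        have hsumm : Summable (fun k => v (1 + k) / β ^ (k+1)) :=
          summable_sval hβ1 (c := fun k => v (1 + k)) (C := m) (fun k => hv0 _) (fun k => hvC _)
        have hle : v (1 + k) / β ^ (k+1) ≤ 0 := by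
          have hle2 : v (1 + k) / β ^ (k+1) ≤ T 1 := by
            simp only [hT]
            rw [sval]
            exact Summable.le_tsum hsumm k (fun j _ => div_nonneg (hv0 _) (by positivity))
          rwa [hT1] at hle2
        have hge : 0 ≤ v (1 + k) / β ^ (k+1) := div_nonneg (hv0 _) (by positivity)
        have : v (1 + k) / β ^ (k+1) = 0 := le_antisymm hle hge
        have hpow : (0:ℝ) < β ^ (k+1) := by positivity
        field_simp at this
        simpa using this
      funext k
      rcases Nat.eq_zero_or_pos k with hk0 | hkpos
      · rw [hk0, hv0m]; norm_num
      · have := hz (k - 1)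
        rw [show 1 + (k - 1) = k by omega] at this
        rw [this, if_neg (by omega)]
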